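/- arXiv:2508.19949 — 2 statements merged into one kernel-verified Lean document; each statement's English description precedes it below -/
import Mathlib

section
/- Let a : [0,∞) → [0,∞) be non-increasing and integrable, and let v ≥ 0. Then for any positive integer m and step size Δ > 0, the Riemann-type error satisfies ∫_0^{mΔ} a(τ(s))^v [a(τ(s)) − a(s)] ds ≤ a(0)^v ∫_0^Δ [a(0) − a(s)] ds + ∫_0^Δ a(s)^{v+1} ds, where τ(s) = ⌊s/Δ⌋Δ. In particular this error is bounded by C·Δ for a constant C depending only on a and v. -/
open MeasureTheory Filter Set

lemma stmt2_rpow_succ {v : ℝ} (hv : 0 ≤ v) {x : ℝ} (hx : 0 ≤ x) :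
    x ^ (v + 1) = x ^ v * x :=
  Real.rpow_add_one' hx (by linarith)

lemma stmt2_key (b : ℝ → ℝ) (hb : Antitone b) (hbn : ∀ x, 0 ≤ b x)
    (v : ℝ) (hv : 0 ≤ v) (m : ℕ) (Δ : ℝ) (hm : 0 < m) (hΔ : 0 < Δ) :
    ∫ s in (0:ℝ)..(m * Δ),
        (b ((⌊s / Δ⌋ : ℝ) * Δ)) ^ v * (b ((⌊s / Δ⌋ : ℝ) * Δ) - b s)
      ≤ (b 0) ^ v * (∫ s in (0:ℝ)..Δ, (b 0 - b s))
        + ∫ s in (0:ℝ)..Δ, (b s) ^ (v + 1) := by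
  set g : ℝ → ℝ := fun s => (b ((⌊s / Δ⌋ : ℝ) * Δ)) ^ v * (b ((⌊s / Δ⌋ : ℝ) * Δ) - b s) with hg
  set t : ℕ → ℝ := fun k => (k : ℝ) * Δ with ht
  set h : ℕ → ℝ → ℝ := fun k s => (b (t k)) ^ v * (b (t k) - b s) with hh
  have htlt : ∀ k : ℕ, t k < t (k + 1) := by
    intro k
    simp only [ht]
    push_cast
    nlinarith
  have htsucc : ∀ k : ℕ, t (k + 1) - t k = Δ := by
    intro k; simp only [ht]; push_cast; ring
  -- floor is constant on the open subinterval
  have hfloor : ∀ (k : ℕ) (s : ℝ), s ∈ Ioo (t k) (t (k + 1)) → ⌊s / Δ⌋ = (k : ℤ) := by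
    intro k s hs
    rw [Int.floor_eq_iff]
    constructor
    · rw [le_div_iff₀ hΔ]
      exact_mod_cast hs.1.le
    · rw [div_lt_iff₀ hΔ]
      have := hs.2
      simp only [ht] at this ⊢
      push_cast at this ⊢
      linarith
  have hInt_h : ∀ k : ℕ, IntervalIntegrable (h k) volume (t k) (t (k + 1)) := by
    intro k
    exact (intervalIntegrable_const.sub hb.intervalIntegrable).const_mul _
  -- a.e. equality of g and h k on each subinterval
  have hae : ∀ k : ℕ, ∀ᵐ s : ℝ, s ∈ Set.uIoc (t k) (t (k + 1)) → g s = h k s := by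
    intro k
    have hne : ∀ᵐ s : ℝ, s ≠ t (k + 1) := by
      rw [ae_iff]
      simp only [ne_eq, not_not, setOf_eq_eq_singleton]
      exact measure_singleton _
    filter_upwards [hne] with s hs hmem
    rw [Set.uIoc_of_le (htlt k).le] at hmem
    have hs2 : s ∈ Ioo (t k) (t (k + 1)) := ⟨hmem.1, lt_of_le_of_ne hmem.2 hs⟩
    have := hfloor k s hs2
    simp only [hg, hh, ht, this, Int.cast_natCast]
  have hInt_g : ∀ k : ℕ, IntervalIntegrable g volume (t k) (t (k + 1)) := by
    intro k
    rw [intervalIntegrable_iff]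
    refine (intervalIntegrable_iff.mp (hInt_h k)).congr ?_
    exact ((ae_restrict_iff' measurableSet_uIoc).mpr ((hae k).mono fun s hs h2 => (hs h2).symm))
  have hpiece : ∀ k : ℕ, (∫ s in (t k)..(t (k + 1)), g s) = ∫ s in (t k)..(t (k + 1)), h k s := by
    intro k
    exact intervalIntegral.integral_congr_ae (hae k)
  -- split the integral
  have hsplit : (∫ s in (0:ℝ)..(m * Δ), g s)
      = ∑ k ∈ Finset.range m, ∫ s in (t k)..(t (k + 1)), g s := by
    rw [intervalIntegral.sum_integral_adjacent_intervals (fun k _ => hInt_g k)]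
    simp only [ht]
    norm_num
  -- the antitone power function
  have hbp_anti : Antitone fun s => b s ^ (v + 1) := fun x y hxy =>
    Real.rpow_le_rpow (hbn y) (hb hxy) (by linarith)
  set F : ℕ → ℝ := fun k => ∫ s in (t k)..(t (k + 1)), b s ^ (v + 1) with hF
  have hFnonneg : ∀ k, 0 ≤ F k := by
    intro k
    exact intervalIntegral.integral_nonneg (htlt k).le fun s _ =>
      Real.rpow_nonneg (hbn s) _
  -- the key telescoping bound for pieces k ≥ 1
  have hbound : ∀ j : ℕ, (∫ s in (t (j + 1))..(t (j + 1 + 1)), h (j + 1) s) ≤ F j - F (j + 1) := by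
    intro j
    set c : ℝ := b (t (j + 1)) with hc
    have hstep1 : (∫ s in (t (j + 1))..(t (j + 1 + 1)), h (j + 1) s)
        ≤ ∫ s in (t (j + 1))..(t (j + 1 + 1)), (c ^ (v + 1) - b s ^ (v + 1)) := by
      apply intervalIntegral.integral_mono_on (htlt (j + 1)).le (hInt_h (j + 1))
        (intervalIntegrable_const.sub hbp_anti.intervalIntegrable)
      intro s hs
      have hbs : b s ≤ c := hb hs.1
      have h1 : b s ^ v * b s ≤ c ^ v * b s :=
        mul_le_mul_of_nonneg_right (Real.rpow_le_rpow (hbn s) hbs hv) (hbn s)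
      have h2 : c ^ (v + 1) = c ^ v * c := stmt2_rpow_succ hv (hbn _)
      have h3 : b s ^ (v + 1) = b s ^ v * b s := stmt2_rpow_succ hv (hbn _)
      have h4 : h (j + 1) s = c ^ v * c - c ^ v * b s := by simp only [hh]; ring
      linarith
    have hstep2 : (∫ s in (t (j + 1))..(t (j + 1 + 1)), (c ^ (v + 1) - b s ^ (v + 1)))
        = Δ * c ^ (v + 1) - F (j + 1) := by
      rw [intervalIntegral.integral_sub intervalIntegrable_const hbp_anti.intervalIntegrable,
        intervalIntegral.integral_const, htsucc (j + 1), smul_eq_mul]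
    have hstep3 : Δ * c ^ (v + 1) ≤ F j := by
      have hmono : (∫ s in (t j)..(t (j + 1)), (c ^ (v + 1) : ℝ))
          ≤ ∫ s in (t j)..(t (j + 1)), b s ^ (v + 1) := by
        apply intervalIntegral.integral_mono_on (htlt j).le intervalIntegrable_const
          hbp_anti.intervalIntegrable
        intro s hs
        exact Real.rpow_le_rpow (hbn _) (hb hs.2) (by linarith)
      rwa [intervalIntegral.integral_const, htsucc j, smul_eq_mul] at hmono
    linarith
  -- assemble
  obtain ⟨n, rfl⟩ : ∃ n, m = n + 1 := ⟨m - 1, (Nat.succ_pred_eq_of_pos hm).symm⟩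
  calc (∫ s in (0:ℝ)..((n + 1 : ℕ) * Δ), g s)
      = ∑ k ∈ Finset.range (n + 1), ∫ s in (t k)..(t (k + 1)), g s := hsplit
    _ = (∑ j ∈ Finset.range n, ∫ s in (t (j + 1))..(t (j + 1 + 1)), g s)
        + ∫ s in (t 0)..(t (0 + 1)), g s := Finset.sum_range_succ' _ n
    _ = (∑ j ∈ Finset.range n, ∫ s in (t (j + 1))..(t (j + 1 + 1)), h (j + 1) s)
        + ∫ s in (t 0)..(t (0 + 1)), h 0 s := by
        rw [hpiece 0]
        congr 1
        exact Finset.sum_congr rfl fun j _ => hpiece (j + 1)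
    _ ≤ (∑ j ∈ Finset.range n, (F j - F (j + 1))) + ∫ s in (t 0)..(t (0 + 1)), h 0 s := by
        gcongr with j hj
        exact hbound j
    _ = (F 0 - F n) + ∫ s in (t 0)..(t (0 + 1)), h 0 s := by rw [Finset.sum_range_sub']
    _ ≤ F 0 + ∫ s in (t 0)..(t (0 + 1)), h 0 s := by linarith [hFnonneg n]
    _ = (b 0) ^ v * (∫ s in (0:ℝ)..Δ, (b 0 - b s)) + ∫ s in (0:ℝ)..Δ, (b s) ^ (v + 1) := by
        have ht0 : t 0 = 0 := by simp [ht]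
        have ht1 : t (0 + 1) = Δ := by norm_num [ht]
        have e1 : (∫ s in (t 0)..(t (0 + 1)), h 0 s)
            = (b 0) ^ v * ∫ s in (0:ℝ)..Δ, (b 0 - b s) := by
          rw [ht0, ht1, ← intervalIntegral.integral_const_mul]
          apply intervalIntegral.integral_congr
          intro s _
          simp only [hh, ht0]
        have e2 : F 0 = ∫ s in (0:ℝ)..Δ, (b s) ^ (v + 1) := by
          simp only [hF, ht0, ht1]
        rw [e1, e2]; ring

/-- Riemann-type discretization error bound for a non-increasing integrable
nonnegative function `a` and exponent `v ≥ 0`, with `τ(s) = ⌊s/Δ⌋Δ`. -/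
theorem stmt2 (a : ℝ → ℝ) (v : ℝ) (hv : 0 ≤ v)
    (ha_nonneg : ∀ x ∈ Ici (0:ℝ), 0 ≤ a x)
    (ha_anti : AntitoneOn a (Ici 0))
    (ha_int : IntegrableOn a (Ici 0)) :
    (∀ (m : ℕ) (Δ : ℝ), 0 < m → 0 < Δ →
      ∫ s in (0:ℝ)..(m * Δ),
          (a ((⌊s / Δ⌋ : ℝ) * Δ)) ^ v * (a ((⌊s / Δ⌋ : ℝ) * Δ) - a s)
        ≤ (a 0) ^ v * (∫ s in (0:ℝ)..Δ, (a 0 - a s))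
          + ∫ s in (0:ℝ)..Δ, (a s) ^ (v + 1)) ∧
    ∃ C : ℝ, ∀ (m : ℕ) (Δ : ℝ), 0 < m → 0 < Δ →
      ∫ s in (0:ℝ)..(m * Δ),
          (a ((⌊s / Δ⌋ : ℝ) * Δ)) ^ v * (a ((⌊s / Δ⌋ : ℝ) * Δ) - a s) ≤ C * Δ := by
  set b : ℝ → ℝ := fun x => a (max x 0) with hbdef
  have hb_anti : Antitone b := fun x y hxy =>
    ha_anti (le_max_right x 0) (le_max_right y 0) (max_le_max hxy le_rfl)
  have hb_eq : ∀ x : ℝ, 0 ≤ x → b x = a x := by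
    intro x hx; simp only [hbdef, max_eq_left hx]
  have hb0 : b 0 = a 0 := hb_eq 0 le_rfl
  have hbn : ∀ x, 0 ≤ b x := fun x => ha_nonneg _ (le_max_right x 0)
  -- conversion of the LHS integral from a to b
  have hLHS : ∀ (m : ℕ) (Δ : ℝ), 0 < m → 0 < Δ →
      (∫ s in (0:ℝ)..(m * Δ),
          (a ((⌊s / Δ⌋ : ℝ) * Δ)) ^ v * (a ((⌊s / Δ⌋ : ℝ) * Δ) - a s))
      = ∫ s in (0:ℝ)..(m * Δ),
          (b ((⌊s / Δ⌋ : ℝ) * Δ)) ^ v * (b ((⌊s / Δ⌋ : ℝ) * Δ) - b s) := by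
    intro m Δ hm hΔ
    apply intervalIntegral.integral_congr
    intro s hs
    have hmΔ : (0:ℝ) ≤ m * Δ := by positivity
    rw [Set.uIcc_of_le hmΔ] at hs
    have hs0 : 0 ≤ s := hs.1
    have hτ : (0:ℝ) ≤ (⌊s / Δ⌋ : ℝ) * Δ := by
      have : (0:ℤ) ≤ ⌊s / Δ⌋ := Int.floor_nonneg.mpr (div_nonneg hs0 hΔ.le)
      have : (0:ℝ) ≤ (⌊s / Δ⌋ : ℝ) := by exact_mod_cast this
      positivity
    simp only [hb_eq _ hτ, hb_eq _ hs0]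
  have hRHS : ∀ Δ : ℝ, 0 < Δ →
      ((a 0) ^ v * (∫ s in (0:ℝ)..Δ, (a 0 - a s)) + ∫ s in (0:ℝ)..Δ, (a s) ^ (v + 1))
      = (b 0) ^ v * (∫ s in (0:ℝ)..Δ, (b 0 - b s)) + ∫ s in (0:ℝ)..Δ, (b s) ^ (v + 1) := by
    intro Δ hΔ
    rw [hb0]
    congr 1
    · congr 1
      apply intervalIntegral.integral_congr
      intro s hs
      rw [Set.uIcc_of_le hΔ.le] at hs
      simp only [hb_eq _ hs.1, hb0]
    · apply intervalIntegral.integral_congr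
      intro s hs
      rw [Set.uIcc_of_le hΔ.le] at hs
      simp only [hb_eq _ hs.1]
  have hmain : ∀ (m : ℕ) (Δ : ℝ), 0 < m → 0 < Δ →
      ∫ s in (0:ℝ)..(m * Δ),
          (a ((⌊s / Δ⌋ : ℝ) * Δ)) ^ v * (a ((⌊s / Δ⌋ : ℝ) * Δ) - a s)
        ≤ (a 0) ^ v * (∫ s in (0:ℝ)..Δ, (a 0 - a s))
          + ∫ s in (0:ℝ)..Δ, (a s) ^ (v + 1) := by
    intro m Δ hm hΔ
    rw [hLHS m Δ hm hΔ, hRHS Δ hΔ]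
    exact stmt2_key b hb_anti hbn v hv m Δ hm hΔ
  refine ⟨hmain, (a 0) ^ v * a 0 + (a 0) ^ (v + 1), ?_⟩
  intro m Δ hm hΔ
  refine le_trans (hmain m Δ hm hΔ) ?_
  rw [hRHS Δ hΔ, hb0.symm]
  have hb0n : 0 ≤ b 0 := hbn 0
  have h1 : (∫ s in (0:ℝ)..Δ, (b 0 - b s)) ≤ Δ * b 0 := by
    have : (∫ s in (0:ℝ)..Δ, (b 0 - b s)) ≤ ∫ s in (0:ℝ)..Δ, (b 0 : ℝ) := by
      apply intervalIntegral.integral_mono_on hΔ.le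
        (intervalIntegrable_const.sub hb_anti.intervalIntegrable) intervalIntegrable_const
      intro s hs
      have := hbn s
      linarith
    rwa [intervalIntegral.integral_const, sub_zero, smul_eq_mul] at this
  have h2 : (∫ s in (0:ℝ)..Δ, (b s) ^ (v + 1)) ≤ Δ * (b 0) ^ (v + 1) := by
    have : (∫ s in (0:ℝ)..Δ, (b s) ^ (v + 1)) ≤ ∫ s in (0:ℝ)..Δ, ((b 0) ^ (v + 1) : ℝ) := by
      have hbp_anti : Antitone fun s => b s ^ (v + 1) := fun x y hxy =>
        Real.rpow_le_rpow (hbn y) (hb_anti hxy) (by linarith)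
      apply intervalIntegral.integral_mono_on hΔ.le
        hbp_anti.intervalIntegrable intervalIntegrable_const
      intro s hs
      exact Real.rpow_le_rpow (hbn s) (hb_anti hs.1) (by linarith)
    rwa [intervalIntegral.integral_const, sub_zero, smul_eq_mul] at this
  have hp : (0:ℝ) ≤ (b 0) ^ v := Real.rpow_nonneg hb0n v
  calc (b 0) ^ v * (∫ s in (0:ℝ)..Δ, (b 0 - b s)) + ∫ s in (0:ℝ)..Δ, (b s) ^ (v + 1)
      ≤ (b 0) ^ v * (Δ * b 0) + Δ * (b 0) ^ (v + 1) := by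
        have := mul_le_mul_of_nonneg_left h1 hp
        linarith
    _ = ((b 0) ^ v * b 0 + (b 0) ^ (v + 1)) * Δ := by ring
end

section
/- Suppose a(s) = ∫_s^∞ φ(y) dy where φ is nonnegative, bounded, and φ(s) ≤ C s^{−α−1} for s large, with α > 1. Then for any r ≥ 1 there is a constant C' such that for all n, Σ_{l=0}^{n−1} Δ ( (1/Δ) ∫_{lΔ}^{(l+1)Δ} [a(lΔ) − a(s)] ds )^r ≤ C' Δ^r, uniformly in Δ ∈ (0,1]. -/
open MeasureTheory Filter Set

/-- If `a(s) = ∫_s^∞ φ(y) dy` with `φ` nonnegative, bounded and `φ(s) ≤ C s^{-α-1}`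
for `s` large (`α > 1`), then for `r ≥ 1` the discretization errors satisfy a
uniform bound of order `Δ^r`. -/
theorem stmt3 (a φ : ℝ → ℝ) (α : ℝ) (hα : 1 < α) (r : ℝ) (hr : 1 ≤ r)
    (hφ_nonneg : ∀ y, 0 ≤ φ y) (M : ℝ) (hφ_bdd : ∀ y, φ y ≤ M)
    (hφ_meas : Measurable φ)
    (hφ_int : IntegrableOn φ (Ioi 0))
    (ha : ∀ s : ℝ, 0 ≤ s → a s = ∫ y in Ioi s, φ y)
    (C s₀ : ℝ) (hs₀ : 0 < s₀)
    (htail : ∀ s : ℝ, s₀ ≤ s → φ s ≤ C * s ^ (-α - 1)) :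
    ∃ C' : ℝ, ∀ (n : ℕ) (Δ : ℝ), 0 < Δ → Δ ≤ 1 →
      ∑ l ∈ Finset.range n,
          Δ * ((1 / Δ) * ∫ s in ((l : ℝ) * Δ)..(((l : ℝ) + 1) * Δ),
            (a ((l : ℝ) * Δ) - a s)) ^ r
        ≤ C' * Δ ^ r := by
  classical
  set A := ∫ y in Ioi 0, φ y with hA
  have hM0 : 0 ≤ M := le_trans (hφ_nonneg 0) (hφ_bdd 0)
  have hA0 : 0 ≤ A := setIntegral_nonneg measurableSet_Ioi fun y _ => hφ_nonneg y
  have hIntOn : ∀ u v : ℝ, IntegrableOn φ (Ioc u v) := by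
    intro u v
    refine Integrable.mono' (integrable_const M) hφ_meas.aestronglyMeasurable.restrict ?_
    filter_upwards with y
    rw [Real.norm_eq_abs, abs_of_nonneg (hφ_nonneg y)]
    exact hφ_bdd y
  have hII : ∀ u v : ℝ, IntervalIntegrable φ volume u v := fun u v =>
    ⟨hIntOn u v, hIntOn v u⟩
  have hIoi : ∀ u : ℝ, 0 ≤ u → IntegrableOn φ (Ioi u) := fun u hu =>
    hφ_int.mono_set (Ioi_subset_Ioi hu)
  have hsplit : ∀ u v : ℝ, 0 ≤ u → u ≤ v → a u - a v = ∫ y in Ioc u v, φ y := by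
    intro u v hu huv
    rw [ha u hu, ha v (hu.trans huv), ← Ioc_union_Ioi_eq_Ioi huv,
      setIntegral_union (Ioc_disjoint_Ioi le_rfl) measurableSet_Ioi (hIntOn u v)
        (hIoi v (hu.trans huv))]
    ring
  refine ⟨M ^ (r - 1) * A, ?_⟩
  intro n Δ hΔ hΔ1
  set b : ℕ → ℝ := fun l => ∫ y in Ioc ((l : ℝ) * Δ) (((l : ℝ) + 1) * Δ), φ y with hb
  have hle : ∀ l : ℕ, (l : ℝ) * Δ ≤ ((l : ℝ) + 1) * Δ := fun l => by nlinarith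
  have hl0 : ∀ l : ℕ, (0 : ℝ) ≤ (l : ℝ) * Δ := fun l => by positivity
  have hb0 : ∀ l : ℕ, 0 ≤ b l := fun l =>
    setIntegral_nonneg measurableSet_Ioc fun y _ => hφ_nonneg y
  have hbM : ∀ l : ℕ, b l ≤ M * Δ := by
    intro l
    have h1 : b l ≤ ∫ _ in Ioc ((l : ℝ) * Δ) (((l : ℝ) + 1) * Δ), M := by
      refine setIntegral_mono_on (hIntOn _ _) (integrableOn_const ?_)
        measurableSet_Ioc fun y _ => hφ_bdd y
      rw [Real.volume_Ioc]; exact ENNReal.ofReal_ne_top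
    rw [setIntegral_const, measureReal_def, Real.volume_Ioc, smul_eq_mul,
      ENNReal.toReal_ofReal (by nlinarith)] at h1
    nlinarith [h1]
  -- the averaged increment
  have hx : ∀ l : ℕ,
      (∫ s in ((l : ℝ) * Δ)..(((l : ℝ) + 1) * Δ), (a ((l : ℝ) * Δ) - a s)) =
        ∫ s in ((l : ℝ) * Δ)..(((l : ℝ) + 1) * Δ), (∫ t in ((l : ℝ) * Δ)..s, φ t) := by
    intro l
    refine intervalIntegral.integral_congr fun s hs => ?_
    rw [uIcc_of_le (hle l)] at hs
    rw [hsplit _ _ (hl0 l) hs.1, intervalIntegral.integral_of_le hs.1]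
  have hg_cont : ∀ l : ℕ, Continuous fun s => ∫ t in ((l : ℝ) * Δ)..s, φ t := fun l =>
    intervalIntegral.continuous_primitive hII _
  have hg_nonneg : ∀ l : ℕ, ∀ s ∈ Icc ((l : ℝ) * Δ) (((l : ℝ) + 1) * Δ),
      0 ≤ ∫ t in ((l : ℝ) * Δ)..s, φ t := fun l s hs =>
    intervalIntegral.integral_nonneg hs.1 fun t _ => hφ_nonneg t
  have hg_le : ∀ l : ℕ, ∀ s ∈ Icc ((l : ℝ) * Δ) (((l : ℝ) + 1) * Δ),
      (∫ t in ((l : ℝ) * Δ)..s, φ t) ≤ b l := by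
    intro l s hs
    rw [intervalIntegral.integral_of_le hs.1]
    exact setIntegral_mono_set (hIntOn _ _)
      (Filter.Eventually.of_forall fun y => hφ_nonneg y)
      (HasSubset.Subset.eventuallyLE (Ioc_subset_Ioc_right hs.2))
  have hI_nonneg : ∀ l : ℕ,
      0 ≤ ∫ s in ((l : ℝ) * Δ)..(((l : ℝ) + 1) * Δ), (a ((l : ℝ) * Δ) - a s) := by
    intro l
    rw [hx l]
    exact intervalIntegral.integral_nonneg (hle l) fun s hs => hg_nonneg l s hs
  have hI_le : ∀ l : ℕ,
      (∫ s in ((l : ℝ) * Δ)..(((l : ℝ) + 1) * Δ), (a ((l : ℝ) * Δ) - a s)) ≤ Δ * b l := by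
    intro l
    rw [hx l]
    have := intervalIntegral.integral_mono_on (hle l)
      ((hg_cont l).intervalIntegrable (μ := volume) _ _) intervalIntegrable_const (hg_le l)
    rw [intervalIntegral.integral_const, smul_eq_mul] at this
    calc (∫ s in ((l : ℝ) * Δ)..(((l : ℝ) + 1) * Δ), ∫ t in ((l : ℝ) * Δ)..s, φ t)
        ≤ (((l : ℝ) + 1) * Δ - (l : ℝ) * Δ) * b l := this
      _ = Δ * b l := by ring
  -- sum of the b l
  have hsum : ∑ l ∈ Finset.range n, b l ≤ A := by
    have h1 : ∀ l : ℕ, b l = ∫ t in ((l : ℝ) * Δ)..(((l : ℝ) + 1) * Δ), φ t := fun l =>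
      (intervalIntegral.integral_of_le (hle l)).symm
    have h2 : ∑ l ∈ Finset.range n, b l = ∫ t in (0 : ℝ)..((n : ℝ) * Δ), φ t := by
      have := intervalIntegral.sum_integral_adjacent_intervals
        (f := φ) (μ := volume) (a := fun k : ℕ => (k : ℝ) * Δ) (n := n) (fun k _ => hII _ _)
      simp only [Nat.cast_zero, zero_mul] at this
      rw [← this]
      refine Finset.sum_congr rfl fun l _ => ?_
      rw [h1 l]; push_cast; ring_nf
    rw [h2]
    rcases le_or_gt (0 : ℝ) ((n : ℝ) * Δ) with h | h
    · rw [intervalIntegral.integral_of_le h]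
      exact setIntegral_mono_set hφ_int
        (Filter.Eventually.of_forall fun y => hφ_nonneg y)
        (HasSubset.Subset.eventuallyLE Ioc_subset_Ioi_self)
    · nlinarith [Nat.cast_nonneg (α := ℝ) n, hΔ]
  -- per-term bound
  have hterm : ∀ l ∈ Finset.range n,
      Δ * ((1 / Δ) * ∫ s in ((l : ℝ) * Δ)..(((l : ℝ) + 1) * Δ),
        (a ((l : ℝ) * Δ) - a s)) ^ r ≤ Δ * ((M * Δ) ^ (r - 1) * b l) := by
    intro l _
    set x := (1 / Δ) * ∫ s in ((l : ℝ) * Δ)..(((l : ℝ) + 1) * Δ), (a ((l : ℝ) * Δ) - a s)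
      with hxdef
    have hx0 : 0 ≤ x := by
      have := hI_nonneg l; positivity
    have hxb : x ≤ b l := by
      rw [hxdef]
      have := hI_le l
      rw [div_mul_eq_mul_div, one_mul, div_le_iff₀ hΔ, mul_comm (b l) Δ]
      exact this
    have hxMΔ : x ≤ M * Δ := hxb.trans (hbM l)
    have hMΔ0 : (0:ℝ) ≤ (M * Δ) ^ (r - 1) := Real.rpow_nonneg (by positivity) _
    have hxr : x ^ r ≤ (M * Δ) ^ (r - 1) * b l := by
      rcases eq_or_lt_of_le hx0 with h0 | h0
      · rw [← h0, Real.zero_rpow (by linarith : r ≠ 0)]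
        exact mul_nonneg hMΔ0 (hb0 l)
      · have hxr' : x ^ r = x ^ (r - 1) * x := by
          rw [← Real.rpow_add_one h0.ne' (r - 1)]; ring_nf
        rw [hxr']
        exact mul_le_mul (Real.rpow_le_rpow hx0 hxMΔ (by linarith)) hxb hx0 hMΔ0
    exact mul_le_mul_of_nonneg_left hxr hΔ.le
  calc ∑ l ∈ Finset.range n,
        Δ * ((1 / Δ) * ∫ s in ((l : ℝ) * Δ)..(((l : ℝ) + 1) * Δ),
          (a ((l : ℝ) * Δ) - a s)) ^ r
      ≤ ∑ l ∈ Finset.range n, Δ * ((M * Δ) ^ (r - 1) * b l) := Finset.sum_le_sum hterm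
    _ = Δ * (M * Δ) ^ (r - 1) * ∑ l ∈ Finset.range n, b l := by
        rw [Finset.mul_sum]; exact Finset.sum_congr rfl fun l _ => by ring
    _ ≤ Δ * (M * Δ) ^ (r - 1) * A := by
        refine mul_le_mul_of_nonneg_left hsum ?_
        have : (0:ℝ) ≤ (M * Δ) ^ (r - 1) := Real.rpow_nonneg (by positivity) _
        positivity
    _ = M ^ (r - 1) * A * Δ ^ r := by
        rw [Real.mul_rpow hM0 hΔ.le]
        have : Δ ^ r = Δ ^ (r - 1) * Δ := by
          rw [← Real.rpow_add_one hΔ.ne' (r - 1)]; ring_nf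
        rw [this]; ring
end
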